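/- Let n ≥ 1 and regard ℂⁿ as a real vector space of dimension 2n. A real-linear bijection g : ℂⁿ → ℂⁿ satisfies p ∘ g = p for every U(n)-invariant real polynomial function p on ℂⁿ if and only if g preserves the Euclidean norm, i.e. ‖g(x)‖ = ‖x‖ for all x (g lies in the orthogonal group O(2n) of the underlying real inner product space). (That is, U(n)′ = O(2n).) -/

import Mathlib

open Matrix

-- Auxiliary lemma 1: unitary matrices preserve the Euclidean norm.
lemma unitary_mulVec_norm {n : ℕ} {u : Matrix (Fin n) (Fin n) ℂ}
    (hu : u ∈ Matrix.unitaryGroup (Fin n) ℂ) (x : EuclideanSpace ℂ (Fin n)) :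
    ‖(WithLp.equiv 2 (Fin n → ℂ)).symm (Matrix.mulVec u x)‖ = ‖x‖ := by
  set y : EuclideanSpace ℂ (Fin n) := (WithLp.equiv 2 (Fin n → ℂ)).symm (Matrix.mulVec u x) with hy
  have key : ∀ z : EuclideanSpace ℂ (Fin n),
      (inner ℂ z z : ℂ) = dotProduct (star (z : Fin n → ℂ)) (z : Fin n → ℂ) := by
    intro z
    simp only [PiLp.inner_apply, dotProduct, RCLike.inner_apply, Pi.star_apply, RCLike.star_def]
    exact Finset.sum_congr rfl fun i _ => mul_comm _ _
  have h1 : star u * u = 1 := (Matrix.mem_unitaryGroup_iff'.mp hu)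
  have h2 : (inner ℂ y y : ℂ) = inner ℂ x x := by
    rw [key, key]
    show dotProduct (star (u *ᵥ x)) (u *ᵥ x) = _
    rw [Matrix.star_mulVec, Matrix.dotProduct_mulVec, Matrix.vecMul_vecMul]
    rw [show uᴴ = star u from rfl, h1, Matrix.vecMul_one]
  rw [inner_self_eq_norm_sq_to_K, inner_self_eq_norm_sq_to_K] at h2
  have h3 : ‖y‖ ^ 2 = ‖x‖ ^ 2 := by exact_mod_cast h2
  exact (sq_eq_sq₀ (norm_nonneg _) (norm_nonneg _)).mp h3

-- Auxiliary lemma 2: U(n) acts transitively on spheres.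
lemma exists_unitary_mulVec_eq {n : ℕ} (hn : 1 ≤ n) (v w : EuclideanSpace ℂ (Fin n))
    (hv : v ≠ 0) (hvw : ‖v‖ = ‖w‖) :
    ∃ u ∈ Matrix.unitaryGroup (Fin n) ℂ,
      (WithLp.equiv 2 (Fin n → ℂ)).symm (Matrix.mulVec u v) = w := by
  classical
  have hw : w ≠ 0 := fun h => hv (norm_eq_zero.mp (hvw.trans (by rw [h, norm_zero])))
  have hnv : ‖v‖ ≠ 0 := norm_ne_zero_iff.mpr hv
  have hnw : ‖w‖ ≠ 0 := norm_ne_zero_iff.mpr hw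
  set i0 : Fin n := ⟨0, hn⟩ with hi0
  set vh : EuclideanSpace ℂ (Fin n) := (‖v‖ : ℂ)⁻¹ • v with hvh
  set wh : EuclideanSpace ℂ (Fin n) := (‖w‖ : ℂ)⁻¹ • w with hwh
  have hcard : Module.finrank ℂ (EuclideanSpace ℂ (Fin n)) = Fintype.card (Fin n) := by
    simp [finrank_euclideanSpace_fin]
  have hnormvh : ‖vh‖ = 1 := by
    rw [hvh, norm_smul]; simp [hnv]
  have hnormwh : ‖wh‖ = 1 := by
    rw [hwh, norm_smul]; simp [hnw]
  have hov : Orthonormal ℂ (({i0} : Set (Fin n)).restrict (fun _ : Fin n => vh)) := by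
    constructor
    · intro i; exact hnormvh
    · intro i j hij
      exact absurd (Subtype.ext ((i.2 : i.1 ∈ ({i0} : Set (Fin n)))
        |>.trans ((j.2 : j.1 ∈ ({i0} : Set (Fin n)))).symm)) hij
  have how : Orthonormal ℂ (({i0} : Set (Fin n)).restrict (fun _ : Fin n => wh)) := by
    constructor
    · intro i; exact hnormwh
    · intro i j hij
      exact absurd (Subtype.ext ((i.2 : i.1 ∈ ({i0} : Set (Fin n)))
        |>.trans ((j.2 : j.1 ∈ ({i0} : Set (Fin n)))).symm)) hij
  obtain ⟨b, hb⟩ := hov.exists_orthonormalBasis_extension_of_card_eq hcard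
  obtain ⟨c, hc⟩ := how.exists_orthonormalBasis_extension_of_card_eq hcard
  have hb0 : b i0 = vh := hb i0 rfl
  have hc0 : c i0 = wh := hc i0 rfl
  set f : EuclideanSpace ℂ (Fin n) ≃ₗᵢ[ℂ] EuclideanSpace ℂ (Fin n) := b.repr.trans c.repr.symm with hf
  have hfb : ∀ i, f (b i) = c i := by
    intro i
    rw [hf]
    simp [LinearIsometryEquiv.trans_apply, OrthonormalBasis.repr_self,
      OrthonormalBasis.repr_symm_single]
  have hfv : f v = w := by
    have h1 : v = (‖v‖ : ℂ) • vh := by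
      rw [hvh, smul_smul]
      rw [mul_inv_cancel₀ (by exact_mod_cast hnv), one_smul]
    rw [h1, f.map_smul, ← hb0, hfb, hc0, hwh, smul_smul, hvw]
    rw [mul_inv_cancel₀ (by exact_mod_cast hnw), one_smul]
  -- the matrix of ` f ` in the standard basis
  set M : Matrix (Fin n) (Fin n) ℂ :=
    fun i j => f (EuclideanSpace.single j 1) i with hM
  have hMmul : ∀ x : EuclideanSpace ℂ (Fin n),
      (WithLp.equiv 2 (Fin n → ℂ)).symm (Matrix.mulVec M x) = f x := by
    intro x
    have hx : ∑ j, x j • EuclideanSpace.single j (1:ℂ) = x := by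
      have := (EuclideanSpace.basisFun (Fin n) ℂ).sum_repr x
      simpa [EuclideanSpace.basisFun_apply, EuclideanSpace.basisFun_repr] using this
    have hsum : f x = ∑ j, x j • f (EuclideanSpace.single j 1) := by
      conv_lhs => rw [← hx]
      rw [map_sum]
      simp only [LinearIsometryEquiv.map_smul]
    ext i
    rw [hsum]
    show (Matrix.mulVec M x) i = _
    simp only [Matrix.mulVec, dotProduct, hM, mul_comm]
    rw [WithLp.ofLp_sum, Finset.sum_apply]
    simp
  refine ⟨M, ?_, by rw [hMmul]; exact hfv⟩
  rw [Matrix.mem_unitaryGroup_iff']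
  ext i j
  have hinner := f.inner_map_map (EuclideanSpace.single i (1:ℂ)) (EuclideanSpace.single j (1:ℂ))
  rw [EuclideanSpace.inner_single_left] at hinner
  simp only [PiLp.inner_apply, RCLike.inner_apply] at hinner
  simp only [Matrix.mul_apply, Matrix.one_apply, Matrix.star_apply, RCLike.star_def]
  simp only [hM]
  rw [show (∑ k, (starRingEnd ℂ) ((f (EuclideanSpace.single i 1)).ofLp k) * (f (EuclideanSpace.single j 1)).ofLp k) = _ from (Finset.sum_congr rfl fun k _ => mul_comm _ _).trans hinner]
  simp [EuclideanSpace.single_apply, eq_comm]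

-- Auxiliary lemma 3: the squared norm is the basic invariant polynomial.
lemma normsq_eq {n : ℕ} (y : EuclideanSpace ℂ (Fin n)) :
    ∑ i, ((y i).re ^ 2 + (y i).im ^ 2) = ‖y‖ ^ 2 := by
  rw [EuclideanSpace.norm_eq, Real.sq_sqrt (by positivity)]
  refine Finset.sum_congr rfl fun i _ => ?_
  rw [Complex.sq_norm, Complex.normSq_apply]
  ring

/-- For `n ≥ 1`, a real-linear bijection `g` of `ℂⁿ` (viewed as a real vector
space) fixes every `U(n)`-invariant real polynomial function on `ℂⁿ` if and only if `g`
preserves the Euclidean norm: `U(n)′ = O(2n)`. -/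
theorem U_prime_eq_O
    (n : ℕ) (hn : 1 ≤ n)
    (g : EuclideanSpace ℂ (Fin n) ≃ₗ[ℝ] EuclideanSpace ℂ (Fin n)) :
    (∀ p : EuclideanSpace ℂ (Fin n) → ℝ,
      (∃ q : MvPolynomial (Fin n ⊕ Fin n) ℝ,
        ∀ x : EuclideanSpace ℂ (Fin n),
          p x = MvPolynomial.eval (Sum.elim (fun i => (x i).re) (fun i => (x i).im)) q) →
      (∀ u ∈ Matrix.unitaryGroup (Fin n) ℂ, ∀ x : EuclideanSpace ℂ (Fin n),
        p ((WithLp.toLp 2 (Matrix.mulVec u x : Fin n → ℂ)) : EuclideanSpace ℂ (Fin n)) = p x) →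
      ∀ x : EuclideanSpace ℂ (Fin n), p (g x) = p x)
    ↔ ∀ x : EuclideanSpace ℂ (Fin n), ‖g x‖ = ‖x‖ := by
  constructor
  · intro h x
    set p : EuclideanSpace ℂ (Fin n) → ℝ :=
      fun y => ∑ i, ((y i).re ^ 2 + (y i).im ^ 2) with hp
    have hpoly : ∃ q : MvPolynomial (Fin n ⊕ Fin n) ℝ,
        ∀ y : EuclideanSpace ℂ (Fin n),
          p y = MvPolynomial.eval (Sum.elim (fun i => (y i).re) (fun i => (y i).im)) q := by
      refine ⟨∑ i : Fin n, ((MvPolynomial.X (Sum.inl i)) ^ 2 + (MvPolynomial.X (Sum.inr i)) ^ 2),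
        fun y => ?_⟩
      simp [hp, map_sum]
    have hinv : ∀ u ∈ Matrix.unitaryGroup (Fin n) ℂ, ∀ y : EuclideanSpace ℂ (Fin n),
        p ((WithLp.toLp 2 (Matrix.mulVec u y : Fin n → ℂ)) : EuclideanSpace ℂ (Fin n)) = p y := by
      intro u hu y
      calc p ((WithLp.toLp 2 (Matrix.mulVec u y : Fin n → ℂ)) : EuclideanSpace ℂ (Fin n))
          = ‖(WithLp.equiv 2 (Fin n → ℂ)).symm (Matrix.mulVec u y)‖ ^ 2 :=
            normsq_eq ((WithLp.equiv 2 (Fin n → ℂ)).symm (Matrix.mulVec u y))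
        _ = ‖y‖ ^ 2 := by rw [unitary_mulVec_norm hu y]
        _ = p y := (normsq_eq y).symm
    have h2 := h p hpoly hinv x
    rw [show p (g x) = ‖g x‖ ^ 2 from normsq_eq (g x),
      show p x = ‖x‖ ^ 2 from normsq_eq x] at h2
    exact (sq_eq_sq₀ (norm_nonneg _) (norm_nonneg _)).mp h2
  · intro hg p _ hinv x
    by_cases hx : x = 0
    · subst hx
      rw [map_zero]
    · obtain ⟨u, hu, huv⟩ := exists_unitary_mulVec_eq hn x (g x) hx (hg x).symm
      have h2 := hinv u hu x
      rw [← huv]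
      exact h2
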